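/- For a dual pair (E, F), a linear functional on E is continuous for the Mackey topology τ(E, F) if and only if it is represented by an element of F; i.e., (E, τ(E,F))' = F. -/

import Mathlib

open Set Filter Topology Pointwise UniformConvergence

/-- The weak topology `σ(F, E)` on `F` induced by a bilinear pairing `B : E × F → ℝ`. -/
def sigmaTopology {E F : Type*} [AddCommGroup E] [Module ℝ E] [AddCommGroup F] [Module ℝ F]
    (B : E →ₗ[ℝ] F →ₗ[ℝ] ℝ) : TopologicalSpace F :=
  TopologicalSpace.induced (fun f (x : E) => B x f) inferInstance

/-- The Mackey topology `τ(E, F)` of a dual pair: the topology on `E` of uniform convergence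
on absolutely convex `σ(F, E)`-compact subsets of `F`. -/
noncomputable def mackeyTopologyOfPairing {E F : Type*} [AddCommGroup E] [Module ℝ E]
    [AddCommGroup F] [Module ℝ F] (B : E →ₗ[ℝ] F →ₗ[ℝ] ℝ) : TopologicalSpace E :=
  TopologicalSpace.induced
    (fun x => UniformOnFun.ofFun
      {S : Set F | Balanced ℝ S ∧ Convex ℝ S ∧ @IsCompact F (sigmaTopology B) S}
      (fun f : F => B x f))
    inferInstance

section Aux

variable {E F : Type*} [AddCommGroup E] [Module ℝ E] [AddCommGroup F] [Module ℝ F]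
  (B : E →ₗ[ℝ] F →ₗ[ℝ] ℝ)

/-- `sigmaTopology B` agrees with the `WeakBilin` topology for the flipped pairing. -/
theorem sigmaTopology_eq :
    sigmaTopology B = (inferInstance : TopologicalSpace (WeakBilin B.flip)) := rfl

/-- The collection of absolutely convex `σ(F,E)`-compact sets. -/
def mackeyFamily : Set (Set F) :=
  {S : Set F | Balanced ℝ S ∧ Convex ℝ S ∧ @IsCompact F (sigmaTopology B) S}

theorem balanced_zero_mem' {S : Set F} (hS : Balanced ℝ S) (hne : S.Nonempty) : (0 : F) ∈ S := by
  obtain ⟨s, hs⟩ := hne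
  have := hS 0 (by norm_num) (smul_mem_smul_set hs (a := (0:ℝ)))
  simpa using this

theorem mackeyFamily_insert_zero {S : Set F} (hS : S ∈ mackeyFamily B) :
    insert (0 : F) S ∈ mackeyFamily B ∧ S ⊆ insert (0 : F) S := by
  obtain ⟨hbal, hcvx, hcpt⟩ := hS
  refine ⟨⟨?_, ?_, ?_⟩, subset_insert _ _⟩
  · rw [Set.insert_eq, Set.singleton_zero]
    exact balanced_zero.union hbal
  · rcases S.eq_empty_or_nonempty with rfl | hne
    · simpa using convex_singleton (0 : F)
    · rwa [Set.insert_eq_self.2 (balanced_zero_mem' hbal hne)]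
  · letI : TopologicalSpace F := sigmaTopology B
    exact hcpt.insert 0

theorem mackeyFamily_add {S T : Set F} (hS : S ∈ mackeyFamily B) (hT : T ∈ mackeyFamily B) :
    S + T ∈ mackeyFamily B := by
  obtain ⟨hSbal, hScvx, hScpt⟩ := hS
  obtain ⟨hTbal, hTcvx, hTcpt⟩ := hT
  refine ⟨hSbal.add hTbal, hScvx.add hTcvx, ?_⟩
  letI : TopologicalSpace F := sigmaTopology B
  haveI : @ContinuousAdd F (sigmaTopology B) _ := WeakBilin.instContinuousAdd B.flip
  exact hScpt.add hTcpt

theorem mackeyFamily_directed : DirectedOn (· ⊆ ·) (mackeyFamily B) := by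
  intro S hS T hT
  obtain ⟨hS', hSsub⟩ := mackeyFamily_insert_zero B hS
  obtain ⟨hT', hTsub⟩ := mackeyFamily_insert_zero B hT
  refine ⟨insert 0 S + insert 0 T, mackeyFamily_add B hS' hT', ?_, ?_⟩
  · intro s hs
    exact ⟨s, hSsub hs, 0, mem_insert 0 T, add_zero s⟩
  · intro t ht
    exact ⟨0, mem_insert 0 S, t, hTsub ht, zero_add t⟩

theorem mackeyFamily_smul {S : Set F} (hS : S ∈ mackeyFamily B) (a : ℝ) :
    a • S ∈ mackeyFamily B := by
  obtain ⟨hbal, hcvx, hcpt⟩ := hS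
  refine ⟨hbal.smul a, hcvx.smul a, ?_⟩
  letI : TopologicalSpace F := sigmaTopology B
  haveI : @ContinuousSMul ℝ F _ _ (sigmaTopology B) := WeakBilin.instContinuousSMul B.flip
  have : a • S = (fun f : F => a • f) '' S := rfl
  rw [this]
  exact hcpt.image (continuous_const.smul continuous_id)

/-- The segment `[-f, f]` is in the Mackey family, witnessing `f`. -/
theorem mackeyFamily_segment (f : F) :
    ((fun t : ℝ => t • f) '' Set.Icc (-1 : ℝ) 1) ∈ mackeyFamily B ∧
      f ∈ (fun t : ℝ => t • f) '' Set.Icc (-1 : ℝ) 1 := by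
  constructor
  · refine ⟨?_, ?_, ?_⟩
    · rintro a ha _ ⟨_, ⟨t, ht, rfl⟩, rfl⟩
      rw [Real.norm_eq_abs] at ha
      have habs : |a * t| ≤ 1 := by
        rw [abs_mul]
        exact mul_le_one₀ ha (abs_nonneg t) (abs_le.2 ⟨ht.1, ht.2⟩)
      refine ⟨a * t, abs_le.1 habs, ?_⟩
      show (a * t) • f = a • (t • f)
      rw [mul_smul]
    · have : (fun t : ℝ => t • f) '' Set.Icc (-1 : ℝ) 1 =
          (LinearMap.toSpanSingleton ℝ F f) '' Set.Icc (-1 : ℝ) 1 := rfl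
      rw [this]
      exact (convex_Icc _ _).linear_image _
    · letI : TopologicalSpace F := sigmaTopology B
      apply isCompact_Icc.image
      apply WeakBilin.continuous_of_continuous_eval (B := B.flip)
      intro x
      simp only [LinearMap.flip_apply, map_smul, smul_eq_mul]
      exact continuous_id.smul continuous_const
  · exact ⟨1, by norm_num, one_smul ℝ f⟩

/-- Dual of the weak-* type topology on the algebraic dual: every continuous linear functional
is evaluation at a point. -/
theorem weak_dual_eval {E : Type*} [AddCommGroup E] [Module ℝ E]
    (g : WeakBilin (LinearMap.id : (E →ₗ[ℝ] ℝ) →ₗ[ℝ] (E →ₗ[ℝ] ℝ)) →ₗ[ℝ] ℝ)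
    (hg : Continuous g) : ∃ x : E, ∀ ψ : E →ₗ[ℝ] ℝ, g ψ = ψ x := by
  have h0 : g 0 = 0 := map_zero g
  have hb := LinearMap.hasBasis_weakBilin (LinearMap.id : (E →ₗ[ℝ] ℝ) →ₗ[ℝ] (E →ₗ[ℝ] ℝ))
  have hmem : g ⁻¹' (Metric.ball (0:ℝ) 1) ∈
      𝓝 (0 : WeakBilin (LinearMap.id : (E →ₗ[ℝ] ℝ) →ₗ[ℝ] (E →ₗ[ℝ] ℝ))) := by
    have := hg.continuousAt (x := 0)
    exact this (by simpa [h0] using Metric.ball_mem_nhds (0:ℝ) one_pos)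
  rw [hb.mem_iff] at hmem
  obtain ⟨U, hU, hUsub⟩ := hmem
  rw [SeminormFamily.basisSets_iff] at hU
  obtain ⟨t, r, hr, rfl⟩ := hU
  have hker : ∀ ψ : E →ₗ[ℝ] ℝ, (∀ x ∈ t, ψ x = 0) → g ψ = 0 := by
    intro ψ hψ
    by_contra hne
    set c : ℝ := 2 / |g ψ| with hc
    have hgψ : 0 < |g ψ| := abs_pos.2 hne
    have hmem : (c • ψ) ∈ (t.sup (LinearMap.toSeminormFamily
        (LinearMap.id : (E →ₗ[ℝ] ℝ) →ₗ[ℝ] (E →ₗ[ℝ] ℝ)))).ball 0 r := by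
      rw [Seminorm.mem_ball_zero]
      refine Seminorm.finset_sup_apply_lt hr fun i hi => ?_
      rw [LinearMap.toSeminormFamily_apply]
      simp [hψ i hi, hr]
    have h2 := hUsub hmem
    change dist (g (c • ψ)) 0 < 1 at h2
    rw [show g (c • ψ) = c * g ψ from map_smul g c ψ] at h2
    simp only [id, mem_preimage, Metric.mem_ball, dist_zero_right, Real.norm_eq_abs, map_smul,
      smul_eq_mul, abs_mul] at h2
    have hcpos : 0 < c := by positivity
    rw [abs_of_pos hcpos, hc, div_mul_cancel₀ _ hgψ.ne'] at h2
    linarith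
  classical
  let L : t → (E →ₗ[ℝ] ℝ) →ₗ[ℝ] ℝ := fun i => LinearMap.applyₗ (i : E)
  have hker' : (⨅ i : t, LinearMap.ker (L i)) ≤ LinearMap.ker g := by
    intro ψ hψ
    simp only [Submodule.mem_iInf, LinearMap.mem_ker] at hψ ⊢
    exact hker ψ fun x hx => hψ ⟨x, hx⟩
  have hspan := mem_span_of_iInf_ker_le_ker hker'
  obtain ⟨c, hc⟩ := (Submodule.mem_span_range_iff_exists_fun ℝ).1 hspan
  refine ⟨∑ i : t, c i • (i : E), fun ψ => ?_⟩
  have := congrArg (fun h : (E →ₗ[ℝ] ℝ) →ₗ[ℝ] ℝ => h ψ) hc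
  simp only [LinearMap.coe_sum, Finset.sum_apply, LinearMap.smul_apply, smul_eq_mul] at this
  refine this.symm.trans ?_
  rw [map_sum]
  refine Finset.sum_congr rfl fun i _ => ?_
  simp [L, mul_comm]

end Aux

/-- for a dual pair `(E, F)`, a linear functional on `E` is continuous for the
Mackey topology `τ(E, F)` if and only if it is represented by an element of `F`;
i.e. `(E, τ(E,F))' = F`. -/
theorem mackey_dual
    {E F : Type*} [AddCommGroup E] [Module ℝ E] [AddCommGroup F] [Module ℝ F]
    (B : E →ₗ[ℝ] F →ₗ[ℝ] ℝ)
    (hsepE : ∀ x : E, x ≠ 0 → ∃ f : F, B x f ≠ 0)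
    (hsepF : ∀ f : F, f ≠ 0 → ∃ x : E, B x f ≠ 0) :
    ∀ φ : E →ₗ[ℝ] ℝ,
      @Continuous E ℝ (mackeyTopologyOfPairing B) _ φ ↔ ∃ f : F, ∀ x, φ x = B x f := by
  intro φ
  set 𝔖 : Set (Set F) := mackeyFamily B with h𝔖
  have hfam : {S : Set F | Balanced ℝ S ∧ Convex ℝ S ∧ @IsCompact F (sigmaTopology B) S} = 𝔖 :=
    rfl
  constructor
  · -- hard direction
    intro hcont
    letI : TopologicalSpace E := mackeyTopologyOfPairing B
    have hne : 𝔖.Nonempty := by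
      refine ⟨∅, balanced_empty, convex_empty, ?_⟩
      letI : TopologicalSpace F := sigmaTopology B
      exact isCompact_empty
    have hdir := mackeyFamily_directed B
    -- extract a basic neighborhood
    have hmem : (⇑φ) ⁻¹' Metric.ball (0:ℝ) 1 ∈ 𝓝 (0 : E) :=
      hcont.continuousAt.preimage_mem_nhds
        (by simpa [map_zero] using Metric.ball_mem_nhds (0:ℝ) one_pos)
    have hnhds : 𝓝 (0 : E) =
        comap (fun x : E => UniformOnFun.ofFun 𝔖 fun f => B x f)
          (𝓝 (UniformOnFun.ofFun 𝔖 fun f => B (0:E) f)) :=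
      nhds_induced _ 0
    rw [hnhds, mem_comap] at hmem
    obtain ⟨U, hU, hUsub⟩ := hmem
    have hbasis := UniformOnFun.hasBasis_nhds F ℝ 𝔖
      (UniformOnFun.ofFun 𝔖 fun f => B (0:E) f) hne hdir
    rw [hbasis.mem_iff] at hU
    obtain ⟨⟨S, V⟩, ⟨hS𝔖, hV⟩, hVsub⟩ := hU
    obtain ⟨ε, hε, hεV⟩ := Metric.mem_uniformity_dist.1 hV
    have hbound : ∀ x : E, (∀ f ∈ S, |B x f| < ε) → |φ x| < 1 := by
      intro x hx
      have hxU : (UniformOnFun.ofFun 𝔖 fun f => B x f) ∈ U := by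
        apply hVsub
        intro f hf
        apply hεV
        have hB0 : (B (0:E)) f = 0 := by simp
        show dist ((B x) f) ((B (0:E)) f) < ε
        rw [hB0, dist_zero_right, Real.norm_eq_abs]
        exact hx f hf
      have := hUsub hxU
      simpa using this
    have hbound' : ∀ x : E, (∀ f ∈ S, |B x f| ≤ ε) → |φ x| ≤ 1 := by
      intro x hx
      by_contra hgt
      push_neg at hgt
      set t : ℝ := |φ x|⁻¹ with ht
      have hφx : (0:ℝ) < |φ x| := lt_trans one_pos hgt
      have htpos : 0 < t := inv_pos.2 hφx
      have htlt : t < 1 := by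
        rw [ht, inv_lt_one_iff₀]; right; exact hgt
      have : |φ (t • x)| < 1 := by
        apply hbound
        intro f hf
        rw [map_smul, LinearMap.smul_apply, smul_eq_mul, abs_mul, abs_of_pos htpos]
        calc t * |B x f| ≤ t * ε := by
              exact mul_le_mul_of_nonneg_left (hx f hf) htpos.le
          _ < 1 * ε := by exact mul_lt_mul_of_pos_right htlt hε
          _ = ε := one_mul ε
      rw [map_smul, smul_eq_mul, abs_mul, abs_of_pos htpos, ht, inv_mul_cancel₀ hφx.ne'] at this
      exact lt_irrefl 1 this
    -- the absolutely convex compact set controlling φ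
    set K : Set F := insert 0 (ε⁻¹ • S) with hKdef
    have hK𝔖 : K ∈ 𝔖 := (mackeyFamily_insert_zero B (mackeyFamily_smul B hS𝔖 ε⁻¹)).1
    have hKpolar : ∀ x : E, (∀ f ∈ K, |B x f| ≤ 1) → |φ x| ≤ 1 := by
      intro x hx
      apply hbound'
      intro f hf
      have h1 : ε⁻¹ • f ∈ K := mem_insert_of_mem _ (smul_mem_smul_set hf)
      have h2 := hx _ h1
      rw [map_smul, smul_eq_mul, abs_mul, abs_of_pos (inv_pos.2 hε)] at h2
      calc |B x f| = ε * (ε⁻¹ * |B x f|) := by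
            rw [← mul_assoc, mul_inv_cancel₀ hε.ne', one_mul]
        _ ≤ ε * 1 := mul_le_mul_of_nonneg_left h2 hε.le
        _ = ε := mul_one ε
    obtain ⟨hKbal, hKcvx, hKcpt⟩ := hK𝔖
    -- move to the algebraic dual with its weak topology
    let Vt := WeakBilin (LinearMap.id : (E →ₗ[ℝ] ℝ) →ₗ[ℝ] (E →ₗ[ℝ] ℝ))
    let j : F → Vt := fun f => B.flip f
    have hjcont : @Continuous F Vt (sigmaTopology B) _ j := by
      letI : TopologicalSpace F := sigmaTopology B
      refine continuous_induced_rng.2 ?_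
      exact continuous_induced_dom
    let K' : Set Vt := j '' K
    have hcpt' : IsCompact K' := by
      letI : TopologicalSpace F := sigmaTopology B
      exact hKcpt.image hjcont
    have hcvx' : Convex ℝ K' := hKcvx.linear_image B.flip
    have hbal' : Balanced ℝ K' := by
      intro a ha y hy
      obtain ⟨z, hz, rfl⟩ := hy
      obtain ⟨f', hf', rfl⟩ := hz
      exact ⟨a • f', hKbal a ha (smul_mem_smul_set hf'), by exact map_smul B.flip a f'⟩
    haveI : T2Space Vt :=
      (WeakBilin.isEmbedding (B := (LinearMap.id : (E →ₗ[ℝ] ℝ) →ₗ[ℝ] (E →ₗ[ℝ] ℝ)))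
        (fun _ _ h => h)).t2Space
    have hclosed : IsClosed K' := hcpt'.isClosed
    have hφK' : (φ : Vt) ∈ K' := by
      by_contra hno
      obtain ⟨g, u, hgK, hgφ⟩ := geometric_hahn_banach_closed_point hcvx' hclosed hno
      obtain ⟨x₀, hx₀⟩ := weak_dual_eval g.toLinearMap g.continuous
      have hgeq : ∀ ψ : E →ₗ[ℝ] ℝ, g ψ = ψ x₀ := hx₀
      have hu0 : 0 < u := by
        have h0K' : (0 : Vt) ∈ K' := ⟨0, mem_insert 0 _, map_zero B.flip⟩
        have h := hgK 0 h0K'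
        rwa [map_zero] at h
      have habs : ∀ f ∈ K, |B x₀ f| < u := by
        intro f hf
        have hnegf : -f ∈ K := by
          have := hKbal (-1) (by norm_num) (smul_mem_smul_set hf)
          simpa using this
        have h1 : B x₀ f < u := by
          have h := hgK _ ⟨f, hf, rfl⟩
          rw [hgeq (j f)] at h
          exact h
        have h2 : B x₀ (-f) < u := by
          have h := hgK _ ⟨-f, hnegf, rfl⟩
          rw [hgeq (j (-f))] at h
          exact h
        rw [map_neg] at h2
        exact abs_lt.2 ⟨by linarith, h1⟩
      have hx : ∀ f ∈ K, |B (u⁻¹ • x₀) f| ≤ 1 := by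
        intro f hf
        rw [map_smul, LinearMap.smul_apply, smul_eq_mul, abs_mul, abs_of_pos (inv_pos.2 hu0)]
        rw [inv_mul_le_iff₀ hu0, mul_one]
        exact (habs f hf).le
      have h1 := hKpolar _ hx
      have h2 : φ (u⁻¹ • x₀) = u⁻¹ * φ x₀ := by rw [map_smul, smul_eq_mul]
      have h3 : u < φ x₀ := by
        have h := hgφ
        rw [hgeq φ] at h
        exact h
      have h4 : 1 < φ (u⁻¹ • x₀) := by
        rw [h2]
        calc (1:ℝ) = u⁻¹ * u := (inv_mul_cancel₀ hu0.ne').symm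
          _ < u⁻¹ * φ x₀ := by
            exact mul_lt_mul_of_pos_left h3 (inv_pos.2 hu0)
      have h5 := le_abs_self (φ (u⁻¹ • x₀))
      linarith
    obtain ⟨f, hfK, hjf⟩ := hφK'
    refine ⟨f, fun x => ?_⟩
    have : (B.flip f : E →ₗ[ℝ] ℝ) = φ := hjf
    rw [← this]
    rfl
  · -- easy direction
    rintro ⟨f, hf⟩
    letI : TopologicalSpace E := mackeyTopologyOfPairing B
    obtain ⟨hSeg, hfSeg⟩ := mackeyFamily_segment B f
    have h1 : Continuous (fun x : E => UniformOnFun.ofFun 𝔖 (fun f => B x f)) :=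
      continuous_induced_dom
    have h2 : Continuous (fun u : F →ᵤ[𝔖] ℝ => (UniformOnFun.toFun 𝔖 u) f) :=
      (UniformOnFun.uniformContinuous_eval_of_mem ℝ 𝔖 hfSeg hSeg).continuous
    have h3 : Continuous (fun x : E => B x f) := h2.comp h1
    have heq : (fun x : E => B x f) = ⇑φ := by
      funext x; rw [hf x]
    rwa [heq] at h3
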